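/- Let m be a positive integer and G a finite group such that |x^G| ≤ m for every x ∈ X(G), where X(G) is the set of commutators [x,y] lying together with x in some Sylow subgroup of G. If P is a Sylow p-subgroup of G for a prime p > m, then [G', P] = 1, i.e., P centralizes the derived subgroup of G. -/

import Mathlib

/-- `Xset G` is the set of commutators `[x,y] = x⁻¹y⁻¹xy` such that `x` and `[x,y]`
both lie in some Sylow subgroup `P` of `G`, `y` arbitrary. -/
def Xset (G : Type*) [Group G] : Set G :=
  {z | ∃ (p : ℕ) (_ : Fact p.Prime) (P : Sylow p G) (x y : G),
    z = x⁻¹ * y⁻¹ * x * y ∧ x ∈ (P : Subgroup G) ∧ z ∈ (P : Subgroup G)}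

section Aux

open Pointwise

variable {G : Type*} [Group G] [Finite G]

/-- `Xset` is closed under conjugation. -/
lemma Xset.conj_mem {z : G} (hz : z ∈ Xset G) (g : G) : g * z * g⁻¹ ∈ Xset G := by
  obtain ⟨p, hp, P, x, y, rfl, hxP, hzP⟩ := hz
  haveI := hp
  let f : G →* G := (MulAut.conj g).toMonoidHom
  have hf : Function.Surjective f := (MulAut.conj g).surjective
  refine ⟨p, hp, P.mapSurjective hf, g * x * g⁻¹, g * y * g⁻¹, by group, ?_, ?_⟩
  · rw [Sylow.coe_mapSurjective]
    exact ⟨x, hxP, by simp [f]⟩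
  · rw [Sylow.coe_mapSurjective]
    exact ⟨x⁻¹ * y⁻¹ * x * y, hzP, by simp [f]⟩

/-- If the conjugacy class of `z` has at most `m < q` elements, then any `q`-subgroup
centralizes `z` (orbit counting). -/
lemma centralizes_of_small_class {m q : ℕ} [Fact q.Prime] (hmq : m < q)
    {Q : Subgroup G} (hQpg : IsPGroup q Q)
    {z : G} (hz : Nat.card {h : G // IsConj z h} ≤ m) {g : G} (hg : g ∈ Q) :
    g * z = z * g := by
  classical
  haveI : Finite (ConjAct G) := Finite.of_equiv G ConjAct.toConjAct.toEquiv
  let f : G →* ConjAct G := ConjAct.toConjAct.toMonoidHom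
  let H : Subgroup (ConjAct G) := Q.map f
  have hH : IsPGroup q H := hQpg.map f
  obtain ⟨n, hn⟩ := IsPGroup.iff_card.mp hH
  have horb_dvd : (MulAction.orbit H z).ncard ∣ q ^ n := by
    rw [← MulAction.index_stabilizer, ← hn]
    exact Subgroup.index_dvd_card _
  have hconj : ∀ h ∈ MulAction.orbit H z, IsConj z h := by
    rintro h ⟨c, rfl⟩
    refine isConj_iff.mpr ⟨ConjAct.ofConjAct (c : ConjAct G), ?_⟩
    show ConjAct.ofConjAct (c : ConjAct G) * z * (ConjAct.ofConjAct (c : ConjAct G))⁻¹ = c • z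
    rw [Subgroup.smul_def, ConjAct.smul_def]
  have horb_le : (MulAction.orbit H z).ncard ≤ m := by
    have hinj := Nat.card_le_card_of_injective
      (fun h : MulAction.orbit H z => (⟨h.1, hconj h.1 h.2⟩ : {h : G // IsConj z h}))
      (fun a b hab => by simpa [Subtype.ext_iff] using hab)
    rw [← Nat.card_coe_set_eq]
    exact hinj.trans hz
  obtain ⟨j, hjn, hj⟩ := (Nat.dvd_prime_pow Fact.out).mp horb_dvd
  have hj0 : j = 0 := by
    by_contra hjne
    have h1 : q ≤ q ^ j := Nat.le_self_pow hjne q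
    have h2 : q ^ j ≤ m := hj ▸ horb_le
    omega
  have h1 : (MulAction.orbit H z).ncard = 1 := by rw [hj, hj0, pow_zero]
  obtain ⟨a, ha⟩ := Set.ncard_eq_one.mp h1
  have hgH : ConjAct.toConjAct g ∈ H := ⟨g, hg, rfl⟩
  have hz_orb : z ∈ MulAction.orbit H z := MulAction.mem_orbit_self z
  have hgz : (⟨ConjAct.toConjAct g, hgH⟩ : H) • z ∈ MulAction.orbit H z :=
    MulAction.mem_orbit z _
  rw [ha, Set.mem_singleton_iff] at hz_orb hgz
  have hfix : (⟨ConjAct.toConjAct g, hgH⟩ : H) • z = z := by rw [hgz, hz_orb]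
  rw [Subgroup.smul_def, ConjAct.smul_def, ConjAct.ofConjAct_toConjAct] at hfix
  exact mul_inv_eq_iff_eq_mul.mp hfix

/-- Any element of `q`-power order of a subgroup `M` containing a Sylow `q`-subgroup `Q`
of `G` can be conjugated into `Q` by an element of `M`. -/
lemma exists_conj_mem_sylow {q : ℕ} [Fact q.Prime] (Q : Sylow q G) (M : Subgroup G)
    (hQM : (Q : Subgroup G) ≤ M) {w : G} (hwM : w ∈ M) {k : ℕ} (hw : w ^ q ^ k = 1) :
    ∃ c ∈ M, c * w * c⁻¹ ∈ (Q : Subgroup G) := by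
  classical
  set w' : M := ⟨w, hwM⟩ with hw'def
  have hw'k : w' ^ q ^ k = 1 := Subtype.ext (by simpa using hw)
  have hpg : IsPGroup q (Subgroup.zpowers w') := by
    intro g
    refine ⟨k, ?_⟩
    obtain ⟨i, hi⟩ := Subgroup.mem_zpowers_iff.mp g.2
    have hcoe : (g : M) ^ q ^ k = 1 := by
      rw [← hi, ← zpow_natCast (w' ^ i), ← zpow_mul, mul_comm, zpow_mul, zpow_natCast, hw'k,
        one_zpow]
    exact Subtype.ext (by simpa using hcoe)
  obtain ⟨R, hR⟩ := hpg.exists_le_sylow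
  have hw'R : w' ∈ R := hR (Subgroup.mem_zpowers w')
  obtain ⟨c, hc⟩ := MulAction.exists_smul_eq M R (Q.subtype hQM)
  have hsub : MulAut.conj c • (R : Subgroup M) = ((Q.subtype hQM : Sylow q M) : Subgroup M) := by
    rw [← Sylow.coe_subgroup_smul, hc]
  have hmem : (MulAut.conj c) w' ∈ MulAut.conj c • (R : Subgroup M) :=
    Subgroup.smul_mem_pointwise_smul w' (MulAut.conj c) (R : Subgroup M) hw'R
  rw [hsub, Sylow.coe_subtype] at hmem
  have hmem' := Subgroup.mem_subgroupOf.mp hmem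
  refine ⟨(c : G), c.2, ?_⟩
  simpa [MulAut.conj_apply] using hmem'

variable (N : Subgroup G) [N.Normal]

/-- Images of elements of a Sylow subgroup commute in the quotient by a subgroup
containing `Xset G`. -/
lemma aux_quot_comm (hXN : Xset G ⊆ N) {q : ℕ} [Fact q.Prime] (Q : Sylow q G) :
    ∀ a ∈ Subgroup.map (QuotientGroup.mk' N) (Q : Subgroup G),
      ∀ b ∈ Subgroup.map (QuotientGroup.mk' N) (Q : Subgroup G), a * b = b * a := by
  set π := QuotientGroup.mk' N with hπdef
  rintro _ ⟨x, hx, rfl⟩ _ ⟨y, hy, rfl⟩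
  have hzQ : x⁻¹ * y⁻¹ * x * y ∈ (Q : Subgroup G) :=
    mul_mem (mul_mem (mul_mem (inv_mem hx) (inv_mem hy)) hx) hy
  have hzX : x⁻¹ * y⁻¹ * x * y ∈ Xset G := ⟨q, ‹_›, Q, x, y, rfl, hx, hzQ⟩
  have h1 : π (x⁻¹ * y⁻¹ * x * y) = 1 := by
    rw [← MonoidHom.mem_ker, QuotientGroup.ker_mk']
    exact hXN hzX
  have h2 : (π x)⁻¹ * (π y)⁻¹ * π x * π y = 1 := by
    simpa [map_mul, map_inv] using h1
  calc π x * π y = (π y * π x) * ((π x)⁻¹ * (π y)⁻¹ * π x * π y) := by group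
  _ = π y * π x := by rw [h2, mul_one]

/-- The image of a Sylow subgroup in the quotient by a subgroup containing `Xset G`
has its normalizer contained in its centralizer. -/
lemma aux_norm_le_cent (hXN : Xset G ⊆ N) {q : ℕ} [Fact q.Prime] (Q : Sylow q G) :
    Subgroup.normalizer ((Subgroup.map (QuotientGroup.mk' N) (Q : Subgroup G) : Subgroup (G ⧸ N)) : Set (G ⧸ N)) ≤
      Subgroup.centralizer ((Subgroup.map (QuotientGroup.mk' N) (Q : Subgroup G) : Subgroup (G ⧸ N)) : Set (G ⧸ N)) := by
  set π := QuotientGroup.mk' N with hπdef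
  intro η hη
  rw [Subgroup.mem_centralizer_iff]
  rintro _ ⟨x, hx, rfl⟩
  obtain ⟨y, rfl⟩ := QuotientGroup.mk'_surjective N η
  show π x * π y = π y * π x
  have hw : y * x * y⁻¹ ∈ (Q : Subgroup G) ⊔ N := by
    have hmem : π (y * x * y⁻¹) ∈ Subgroup.map π (Q : Subgroup G) := by
      rw [map_mul, map_mul, map_inv]
      exact (Subgroup.mem_normalizer_iff.mp hη (π x)).mp ⟨x, hx, rfl⟩
    have hcm : y * x * y⁻¹ ∈ Subgroup.comap π (Subgroup.map π (Q : Subgroup G)) := hmem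
    rwa [Subgroup.comap_map_eq, QuotientGroup.ker_mk'] at hcm
  obtain ⟨k, hk⟩ := Q.2 ⟨x, hx⟩
  have hxk : x ^ q ^ k = 1 := by simpa [Subtype.ext_iff] using hk
  have hwk : (y * x * y⁻¹) ^ q ^ k = 1 := by
    have h2 : (MulAut.conj y) (x ^ q ^ k) = (y * x * y⁻¹) ^ q ^ k := by
      rw [map_pow, MulAut.conj_apply]
    rw [hxk, map_one] at h2
    exact h2.symm
  obtain ⟨c, hcM, hc⟩ := exists_conj_mem_sylow Q ((Q : Subgroup G) ⊔ N) le_sup_left hw hwk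
  set u : G := y⁻¹ * c⁻¹ with hu
  have hzQ : x⁻¹ * u⁻¹ * x * u ∈ (Q : Subgroup G) := by
    have heq : x⁻¹ * u⁻¹ * x * u = x⁻¹ * (c * (y * x * y⁻¹) * c⁻¹) := by
      rw [hu]; group
    rw [heq]
    exact mul_mem (inv_mem hx) hc
  have hzX : x⁻¹ * u⁻¹ * x * u ∈ Xset G := ⟨q, ‹_›, Q, x, u, rfl, hx, hzQ⟩
  have h1 : π (x⁻¹ * u⁻¹ * x * u) = 1 := by
    rw [← MonoidHom.mem_ker, QuotientGroup.ker_mk']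
    exact hXN hzX
  have h2 : (π x)⁻¹ * (π u)⁻¹ * π x * π u = 1 := by
    simpa [map_mul, map_inv] using h1
  have C1 : Commute (π x) (π u) := by
    show π x * π u = π u * π x
    calc π x * π u = (π u * π x) * ((π x)⁻¹ * (π u)⁻¹ * π x * π u) := by group
    _ = π u * π x := by rw [h2, mul_one]
  have hcQ : π c ∈ Subgroup.map π (Q : Subgroup G) := by
    have hmapN : Subgroup.map π N = ⊥ :=
      (Subgroup.map_eq_bot_iff _).mpr (QuotientGroup.ker_mk' N).ge
    have hmapsup : Subgroup.map π ((Q : Subgroup G) ⊔ N) = Subgroup.map π (Q : Subgroup G) := by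
      rw [Subgroup.map_sup, hmapN, sup_bot_eq]
    exact hmapsup ▸ Subgroup.mem_map_of_mem π hcM
  have C2 : Commute (π x) (π c) :=
    aux_quot_comm N hXN Q (π x) ⟨x, hx, rfl⟩ (π c) hcQ
  have hy' : π y = (π c)⁻¹ * (π u)⁻¹ := by
    rw [hu]
    simp only [map_mul, map_inv]
    group
  have hfin : Commute (π x) (π y) := by
    rw [hy']
    exact (C2.inv_right).mul_right (C1.inv_right)
  exact hfin

/-- If `N` is a normal subgroup containing `Xset G`, then `N` contains the derived
subgroup of `G` (via Burnside's normal `p`-complement theorem applied to the quotient). -/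
lemma commutator_le_of_Xset_subset (hXN : Xset G ⊆ N) : commutator G ≤ N := by
  classical
  set π := QuotientGroup.mk' N with hπdef
  have hπ : Function.Surjective π := QuotientGroup.mk'_surjective N
  have key : ∀ g ∈ commutator (G ⧸ N), g = 1 := by
    intro g hg
    rw [← orderOf_eq_one_iff]
    by_contra hne
    have hprime := Nat.minFac_prime hne
    haveI : Fact ((orderOf g).minFac).Prime := ⟨hprime⟩
    set q := (orderOf g).minFac
    obtain ⟨Q⟩ := Sylow.nonempty (p := q) (G := G)
    set Q' : Sylow q (G ⧸ N) := Q.mapSurjective hπ with hQ'def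
    have hQ'coe : (Q' : Subgroup (G ⧸ N)) = Subgroup.map π (Q : Subgroup G) := rfl
    have hnc : Subgroup.normalizer ((Q' : Subgroup (G ⧸ N)) : Set (G ⧸ N)) ≤
        Subgroup.centralizer ((Q' : Subgroup (G ⧸ N)) : Set (G ⧸ N)) := by
      rw [hQ'coe]
      exact aux_norm_le_cent N hXN Q
    have hle : commutator (G ⧸ N) ≤ (MonoidHom.transferSylow Q' hnc).ker := by
      rw [commutator_def, Subgroup.commutator_le]
      intro a _ b _
      rw [MonoidHom.mem_ker, map_commutatorElement]
      refine commutatorElement_eq_one_iff_commute.mpr ?_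
      have hcomm : ∀ u v : (Q' : Subgroup (G ⧸ N)), u * v = v * u := by
        intro u v
        refine Subtype.ext ?_
        exact aux_quot_comm N hXN Q u (hQ'coe ▸ u.2) v (hQ'coe ▸ v.2)
      exact hcomm _ _
    have hdvd : orderOf g ∣ Nat.card (MonoidHom.transferSylow Q' hnc).ker :=
      Subgroup.orderOf_dvd_natCard _ (hle hg)
    exact MonoidHom.not_dvd_card_ker_transferSylow Q' hnc
      (dvd_trans (Nat.minFac_dvd _) hdvd)
  have hbot : commutator (G ⧸ N) = ⊥ := (Subgroup.eq_bot_iff_forall _).mpr key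
  have hmap : Subgroup.map π (commutator G) = ⊥ := by
    rw [commutator_def, Subgroup.map_commutator, Subgroup.map_top_of_surjective π hπ,
      ← commutator_def, hbot]
  have hker := (Subgroup.map_eq_bot_iff _).mp hmap
  rwa [QuotientGroup.ker_mk'] at hker

end Aux

/-- If every element of `Xset G` has conjugacy class of size at most `m` and `p > m`
is a prime, then any Sylow `p`-subgroup of `G` centralizes `G'`. -/
theorem sylow_centralizes_derived (G : Type*) [Group G] [Finite G] (m : ℕ) (hm : 0 < m)
    (hX : ∀ x ∈ Xset G, Nat.card {h : G // IsConj x h} ≤ m)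
    (p : ℕ) [Fact p.Prime] (hp : m < p) (P : Sylow p G) :
    ⁅commutator G, (P : Subgroup G)⁆ = ⊥ := by
  classical
  rw [Subgroup.commutator_eq_bot_iff_le_centralizer]
  set N : Subgroup G := Subgroup.closure (Xset G) with hNdef
  have hXN : Xset G ⊆ N := Subgroup.subset_closure
  haveI hNnormal : N.Normal := by
    constructor
    intro n hn g
    have hmap : Subgroup.map (MulAut.conj g).toMonoidHom N ≤ N := by
      rw [hNdef, MonoidHom.map_closure]
      refine Subgroup.closure_mono ?_
      rintro _ ⟨z, hz, rfl⟩
      simpa using Xset.conj_mem hz g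
    have : (MulAut.conj g).toMonoidHom n ∈ Subgroup.map (MulAut.conj g).toMonoidHom N :=
      Subgroup.mem_map_of_mem _ hn
    simpa using hmap this
  refine le_trans (commutator_le_of_Xset_subset N hXN) ((Subgroup.closure_le _).mpr ?_)
  intro z hz
  rw [SetLike.mem_coe, Subgroup.mem_centralizer_iff]
  intro h hh
  exact centralizes_of_small_class hp P.2 (hX z hz) hh
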